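/- The function h(ζ) = 2√(ζ(ζ−1)) − 2ζ + ln(4e·ζ·(−1 + 2ζ − 2√(ζ(ζ−1)))), analytic on ℂ \ [0,1], has the Laurent expansion at infinity h(ζ) = Σ_{j≥1} b_j/ζ^j with b_j = 2(2j−1)!/((j+1)(j!)² 4^j); in particular b_1 = 1/4, b_2 = 1/16, b_3 = 5/192. -/

import Mathlib

open Complex Filter Asymptotics
open scoped Nat

/-- The branch of `√(ζ(ζ - 1))` with cut `[0, 1]` that behaves like `ζ` as `ζ → +∞`. -/
noncomputable def sqrtBranch1 (ζ : ℂ) : ℂ :=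
  ζ * (1 - 1 / ζ) ^ ((1 : ℂ) / 2)

/-- The function `h(ζ) = 2√(ζ(ζ-1)) - 2ζ + ln(4e·ζ·(-1 + 2ζ - 2√(ζ(ζ-1))))`, analytic on
`ℂ \ [0,1]`. -/
noncomputable def hFun (ζ : ℂ) : ℂ :=
  2 * sqrtBranch1 ζ - 2 * ζ
    + Complex.log (4 * (Real.exp 1 : ℂ) * ζ * (-1 + 2 * ζ - 2 * sqrtBranch1 ζ))

/-- The Laurent coefficients `b_j = 2(2j-1)!/((j+1)(j!)² 4^j)`. -/
noncomputable def laurentCoeff (j : ℕ) : ℝ :=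
  2 * (2 * j - 1)! / ((j + 1) * (j !) ^ 2 * 4 ^ j)

/-! ### Auxiliary definitions -/

/-- principal square root `√(1-x)`. -/
noncomputable def hlU (x : ℂ) : ℂ := (1 - x) ^ ((1:ℂ)/2)

/-- `v = 2/(1+√(1-x))`. -/
noncomputable def hlV (x : ℂ) : ℂ := 2 / (1 + hlU x)

/-- `g(x) = 1 - v + 2 log v`; one has `hFun ζ = g(1/ζ)` for large `ζ`. -/
noncomputable def hlG (x : ℂ) : ℂ := 1 - hlV x + 2 * Complex.log (hlV x)

/-- real form of the Laurent coefficients: `catalan j / (j 4^j)`. -/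
noncomputable def hlBR (j : ℕ) : ℝ := catalan j / (j * 4 ^ j)

/-- complex Laurent coefficients. -/
noncomputable def hlB (j : ℕ) : ℂ := (hlBR j : ℂ)

/-- sum of the Laurent series in the variable `x = 1/ζ`. -/
noncomputable def hlS (x : ℂ) : ℂ := ∑' j, hlB j * x ^ j

/-- generating function of the Catalan numbers. -/
noncomputable def hlC (y : ℂ) : ℂ := ∑' n, (catalan n : ℂ) * y ^ n

/-! ### Basic facts about the square-root branch -/

lemma hlU_sq {x : ℂ} (hx : x ≠ 1) : hlU x * hlU x = 1 - x := by
  have h1 : (1 : ℂ) - x ≠ 0 := sub_ne_zero.2 (by simpa [eq_comm] using hx)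
  rw [hlU, ← Complex.cpow_add _ _ h1]
  norm_num

lemma hlU_re_pos {x : ℂ} (hx : x.re < 1) : 0 < (hlU x).re := by
  have h1 : ((1 : ℂ) - x).re = 1 - x.re := by simp
  have hre : 0 < ((1:ℂ) - x).re := by rw [h1]; linarith
  have h0 : (1 : ℂ) - x ≠ 0 := by
    intro h; rw [h] at hre; simp at hre
  have harg : |Complex.arg (1 - x)| < Real.pi / 2 :=
    Complex.abs_arg_lt_pi_div_two_iff.2 (Or.inl hre)
  rw [hlU, Complex.cpow_def_of_ne_zero h0, Complex.exp_re]
  have him : (Complex.log (1 - x) * (1/2)).im = Complex.arg (1 - x) / 2 := by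
    simp [Complex.mul_im, Complex.log_im]; ring
  rw [him]
  have hπ : 0 < Real.pi := Real.pi_pos
  have : 0 < Real.cos (Complex.arg (1 - x) / 2) := by
    apply Real.cos_pos_of_mem_Ioo
    constructor
    · cases abs_lt.1 harg with | intro h1 h2 => nlinarith
    · cases abs_lt.1 harg with | intro h1 h2 => nlinarith
  positivity

lemma hlU_ne_zero {x : ℂ} (hx : x.re < 1) : hlU x ≠ 0 := by
  intro h
  have := hlU_re_pos hx
  rw [h] at this; simp at this

lemma one_add_hlU_ne {x : ℂ} (hx : x.re < 1) : 1 + hlU x ≠ 0 := by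
  intro h
  have h2 : (1 + hlU x).re = 1 + (hlU x).re := by simp
  rw [h] at h2; simp at h2
  nlinarith [hlU_re_pos hx]

lemma hlV_re_pos {x : ℂ} (hx : x.re < 1) : 0 < (hlV x).re := by
  rw [hlV, Complex.div_re]
  have h1 : ((2:ℂ)).re = 2 := by simp
  have h2 : ((2:ℂ)).im = 0 := by simp
  rw [h1, h2]
  have hq : 0 < Complex.normSq (1 + hlU x) :=
    Complex.normSq_pos.2 (one_add_hlU_ne hx)
  have hre : 0 < (1 + hlU x).re := by
    have := hlU_re_pos hx
    simp only [Complex.add_re, Complex.one_re]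
    linarith
  have : 0 < 2 * (1 + hlU x).re / Complex.normSq (1 + hlU x) := by positivity
  simpa using this

lemma hlV_ne_zero {x : ℂ} (hx : x.re < 1) : hlV x ≠ 0 := by
  intro h
  have := hlV_re_pos hx
  rw [h] at this; simp at this

lemma hlU_zero : hlU 0 = 1 := by simp [hlU]

lemma hlV_zero : hlV 0 = 1 := by norm_num [hlV, hlU_zero]

lemma hlG_zero : hlG 0 = 0 := by simp [hlG, hlV_zero]

/-! ### The Catalan generating function -/

lemma catalan_le_four_pow (n : ℕ) : catalan n ≤ 4 ^ n := by
  have h : (2*n).choose n ≤ ∑ m ∈ Finset.range (2*n+1), (2*n).choose m :=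
    Finset.single_le_sum (f := fun m => (2*n).choose m) (fun i _ => Nat.zero_le _)
      (Finset.mem_range.2 (by omega))
  calc catalan n ≤ (n+1) * catalan n := Nat.le_mul_of_pos_left _ (Nat.succ_pos n)
    _ = Nat.centralBinom n := succ_mul_catalan_eq_centralBinom n
    _ = (2*n).choose n := Nat.centralBinom_eq_two_mul_choose n ▸ rfl
    _ ≤ 2 ^ (2*n) := h.trans_eq (Nat.sum_range_choose (2*n))
    _ = 4 ^ n := by rw [pow_mul]; norm_num

lemma catalan_norm_le (n : ℕ) {y : ℂ} : ‖(catalan n : ℂ) * y ^ n‖ ≤ (4 * ‖y‖) ^ n := by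
  rw [norm_mul, norm_pow, mul_pow, Complex.norm_natCast]
  gcongr
  calc ((catalan n : ℝ)) ≤ ((4:ℕ) ^ n : ℕ) := by exact_mod_cast catalan_le_four_pow n
    _ = 4 ^ n := by push_cast; ring

lemma summable_catalan {y : ℂ} (hy : ‖y‖ < 1/4) :
    Summable (fun n => ‖(catalan n : ℂ) * y ^ n‖) :=
  Summable.of_nonneg_of_le (fun n => norm_nonneg _) (fun n => catalan_norm_le n)
    (summable_geometric_of_lt_one (by positivity) (by linarith))

lemma hasSum_hlC {y : ℂ} (hy : ‖y‖ < 1/4) :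
    HasSum (fun n => (catalan n : ℂ) * y ^ n) (hlC y) :=
  ((summable_catalan hy).of_norm).hasSum

lemma hlC_norm_le {y : ℂ} (hy : ‖y‖ < 1/4) : ‖hlC y‖ ≤ (1 - 4 * ‖y‖)⁻¹ := by
  have h1 : ‖hlC y‖ ≤ ∑' n, ‖(catalan n : ℂ) * y ^ n‖ :=
    norm_tsum_le_tsum_norm (summable_catalan hy)
  have h2 : ∑' n, ‖(catalan n : ℂ) * y ^ n‖ ≤ ∑' n : ℕ, (4 * ‖y‖) ^ n :=
    Summable.tsum_le_tsum (fun n => catalan_norm_le n) (summable_catalan hy)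
      (summable_geometric_of_lt_one (by positivity) (by linarith))
  have h3 : ∑' n : ℕ, (4 * ‖y‖) ^ n = (1 - 4 * ‖y‖)⁻¹ := by
    rw [tsum_geometric_of_lt_one (by positivity) (by linarith)]
  linarith

lemma hasSum_hlC_sq {y : ℂ} (hy : ‖y‖ < 1/4) :
    HasSum (fun n => (catalan (n+1) : ℂ) * y ^ n) (hlC y ^ 2) := by
  have key := hasSum_sum_range_mul_of_summable_norm (summable_catalan hy) (summable_catalan hy)
  have heq : ∀ n, (∑ k ∈ Finset.range (n + 1),
      ((catalan k : ℂ) * y ^ k) * ((catalan (n - k) : ℂ) * y ^ (n - k)))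
      = (catalan (n+1) : ℂ) * y ^ n := by
    intro n
    have hterm : ∀ k ∈ Finset.range (n+1),
        ((catalan k : ℂ) * y ^ k) * ((catalan (n - k) : ℂ) * y ^ (n - k))
        = ((catalan k * catalan (n - k) : ℕ) : ℂ) * y ^ n := by
      intro k hk
      rw [Finset.mem_range, Nat.lt_succ_iff] at hk
      have : y ^ k * y ^ (n - k) = y ^ n := by
        rw [← pow_add, Nat.add_sub_cancel' hk]
      push_cast
      rw [← this]; ring
    rw [Finset.sum_congr rfl hterm, ← Finset.sum_mul, ← Nat.cast_sum]
    congr 2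
    rw [catalan_succ' n,
      ← Finset.Nat.sum_antidiagonal_eq_sum_range_succ (fun x y => catalan x * catalan y)]
  simp only [heq] at key
  rw [hlC, sq]
  exact key

lemma hlC_quadratic {y : ℂ} (hy : ‖y‖ < 1/4) : y * hlC y ^ 2 = hlC y - 1 := by
  have h1 : HasSum (fun n => (catalan (n+1) : ℂ) * y ^ (n+1)) (y * hlC y ^ 2) := by
    have := (hasSum_hlC_sq hy).mul_left y
    have e : (fun n => (catalan (n+1) : ℂ) * y ^ (n+1)) = fun n => y * ((catalan (n+1) : ℂ) * y ^ n) := by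
      funext n; ring
    rw [e]; exact this
  have h2 : HasSum (fun n => (catalan (n+1) : ℂ) * y ^ (n+1)) (hlC y - 1) := by
    apply (hasSum_nat_add_iff (f := fun n => (catalan n : ℂ) * y ^ n) 1).2
    simpa using hasSum_hlC hy
  exact h1.unique h2

lemma hlC_sq_eq {y : ℂ} (hy : ‖y‖ < 1/4) :
    (2 * y * hlC y - 1) * (2 * y * hlC y - 1) = 1 - 4 * y := by
  linear_combination 4 * y * hlC_quadratic hy

lemma hlC_zero : hlC 0 = 1 := by
  rw [hlC, tsum_eq_single 0 (by intro n hn; simp [zero_pow hn])]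
  simp

lemma re_four_lt {y : ℂ} (hy : ‖y‖ < 1/32) : (4*y).re < 1 := by
  have h1 : (4*y).re ≤ ‖4*y‖ := Complex.re_le_norm _
  have h2 : ‖4*y‖ = 4 * ‖y‖ := by rw [norm_mul]; simp
  linarith

lemma hlC_closed {y : ℂ} (hy : ‖y‖ < 1/32) : hlC y = 2 / (1 + hlU (4*y)) := by
  have hy4 : ‖y‖ < 1/4 := by linarith
  have hre : (4*y).re < 1 := re_four_lt hy
  have hne1 : (4:ℂ)*y ≠ 1 := by
    intro h
    have h1 : ‖(4:ℂ)*y‖ = 1 := by rw [h]; simp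
    rw [norm_mul, Complex.norm_ofNat] at h1
    linarith
  set u := hlU (4*y) with hu
  have husq : u * u = 1 - 4*y := hlU_sq hne1
  have hure : 0 < u.re := hlU_re_pos hre
  set w := 2 * y * hlC y - 1 with hw
  have hwsq : w * w = u * u := by rw [husq]; exact hlC_sq_eq hy4
  have hwre : w.re < 0 := by
    have h1 : (2 * y * hlC y).re ≤ ‖2 * y * hlC y‖ := Complex.re_le_norm _
    have h2 : ‖2 * y * hlC y‖ = 2 * ‖y‖ * ‖hlC y‖ := by
      rw [norm_mul, norm_mul, Complex.norm_ofNat]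
    have h3 : ‖hlC y‖ ≤ (1 - 4*‖y‖)⁻¹ := hlC_norm_le hy4
    have h4 : (1 - 4*‖y‖)⁻¹ ≤ 2 := by
      rw [inv_le_comm₀ (by linarith) (by norm_num)]
      linarith
    have h5 : 2 * ‖y‖ * ‖hlC y‖ ≤ 2 * ‖y‖ * 2 := by
      have := norm_nonneg y
      nlinarith [norm_nonneg (hlC y)]
    have : (2 * y * hlC y).re < 1 := by
      calc (2 * y * hlC y).re ≤ 2 * ‖y‖ * ‖hlC y‖ := by rw [← h2]; exact h1
        _ ≤ 2 * ‖y‖ * 2 := h5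
        _ < 1 := by linarith
    simp only [hw, Complex.sub_re, Complex.one_re]
    linarith
  have hwu : w = -u := by
    have hfac : (w - u) * (w + u) = 0 := by ring_nf; linear_combination hwsq
    rcases mul_eq_zero.1 hfac with h | h
    · exfalso
      have hweq : w = u := sub_eq_zero.1 h
      rw [hweq] at hwre; linarith
    · exact eq_neg_of_add_eq_zero_left h
  have h2y : 2 * y * hlC y = 1 - u := by
    rw [hw] at hwu
    linear_combination hwu
  have hune : 1 + u ≠ 0 := one_add_hlU_ne hre
  rcases eq_or_ne y 0 with rfl | hy0
  · rw [hlC_zero]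
    have hu1 : u = 1 := by rw [hu, show (4:ℂ) * 0 = 0 from by ring, hlU_zero]
    rw [hu1]
    norm_num
  · have hmul : (1 + u) * hlC y = 2 := by
      have h4y : (1 + u) * (1 - u) = 4 * y := by linear_combination -husq
      apply mul_left_cancel₀ (mul_ne_zero (two_ne_zero (α := ℂ)) hy0)
      calc 2 * y * ((1 + u) * hlC y) = (1 + u) * (2 * y * hlC y) := by ring
        _ = (1 + u) * (1 - u) := by rw [h2y]
        _ = 4 * y := h4y
        _ = 2 * y * 2 := by ring
    rw [eq_div_iff hune]
    linear_combination hmul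

/-! ### The coefficients -/

lemma laurentCoeff_eq_hlBR {j : ℕ} (hj : 1 ≤ j) : laurentCoeff j = hlBR j := by
  have hnat : 2 * (2 * j - 1)! * (j * 4 ^ j) = catalan j * ((j + 1) * (j !) ^ 2 * 4 ^ j) := by
    have h1 : (j + 1) * catalan j = Nat.centralBinom j := succ_mul_catalan_eq_centralBinom j
    have h2 : Nat.centralBinom j * (j ! * j !) = (2 * j)! := by
      rw [Nat.centralBinom, ← Nat.choose_mul_factorial_mul_factorial (by omega : j ≤ 2 * j),
        show 2 * j - j = j from by omega]
      ring
    have h3 : (2 * j)! = 2 * j * (2 * j - 1)! := by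
      have h := Nat.factorial_succ (2 * j - 1)
      rw [show 2 * j - 1 + 1 = 2 * j from by omega] at h
      exact h
    calc 2 * (2 * j - 1)! * (j * 4 ^ j) = (2 * j * (2 * j - 1)!) * 4 ^ j := by ring
      _ = (2 * j)! * 4 ^ j := by rw [h3]
      _ = Nat.centralBinom j * (j ! * j !) * 4 ^ j := by rw [h2]
      _ = ((j+1) * catalan j) * (j ! * j !) * 4 ^ j := by rw [h1]
      _ = catalan j * ((j + 1) * (j !) ^ 2 * 4 ^ j) := by ring
  rw [laurentCoeff, hlBR, div_eq_div_iff (by positivity) (by positivity)]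
  exact_mod_cast hnat

lemma hlBR_nonneg (j : ℕ) : 0 ≤ hlBR j := by rw [hlBR]; positivity

lemma hlBR_le_one (j : ℕ) : hlBR j ≤ 1 := by
  rcases Nat.eq_zero_or_pos j with rfl | hj
  · simp [hlBR]
  · rw [hlBR, div_le_one (by positivity)]
    calc (catalan j : ℝ) ≤ 4 ^ j := by exact_mod_cast catalan_le_four_pow j
      _ ≤ j * 4 ^ j := by
        have : (1:ℝ) ≤ j := by exact_mod_cast hj
        nlinarith [pow_pos (by norm_num : (0:ℝ) < 4) j]

lemma hlB_zero : hlB 0 = 0 := by simp [hlB, hlBR]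

lemma hlB_norm_le (j : ℕ) : ‖hlB j‖ ≤ 1 := by
  rw [hlB, Complex.norm_real, Real.norm_eq_abs, _root_.abs_of_nonneg (hlBR_nonneg j)]
  exact hlBR_le_one j

lemma hlB_succ (n : ℕ) : hlB (n+1) * (n+1) = (catalan (n+1) : ℂ) / 4 ^ (n+1) := by
  have hne : ((n:ℂ) + 1) ≠ 0 := Nat.cast_add_one_ne_zero n
  have h4 : ((4:ℂ)) ^ (n+1) ≠ 0 := pow_ne_zero _ (by norm_num)
  rw [hlB, hlBR]
  push_cast
  field_simp

/-! ### The series `hlS` and its derivative -/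

lemma hlS_term_norm_le (j : ℕ) (x : ℂ) : ‖hlB j * x ^ j‖ ≤ ‖x‖ ^ j := by
  rw [norm_mul, norm_pow]
  calc ‖hlB j‖ * ‖x‖ ^ j ≤ 1 * ‖x‖ ^ j := by
        gcongr; exact hlB_norm_le j
    _ = ‖x‖ ^ j := one_mul _

lemma summable_hlS {x : ℂ} (hx : ‖x‖ < 1) : Summable (fun j => ‖hlB j * x ^ j‖) :=
  Summable.of_nonneg_of_le (fun n => norm_nonneg _) (fun n => hlS_term_norm_le n x)
    (summable_geometric_of_lt_one (norm_nonneg x) hx)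

lemma hasSum_hlS {x : ℂ} (hx : ‖x‖ < 1) :
    HasSum (fun j => hlB j * x ^ j) (hlS x) :=
  ((summable_hlS hx).of_norm).hasSum

lemma hlS_zero : hlS 0 = 0 := by
  rw [hlS, tsum_eq_single 0 (by intro n hn; simp [zero_pow hn])]
  simp [hlB_zero]

lemma hasSum_hlS_deriv {x : ℂ} (hx : ‖x‖ < 1/8) :
    HasSum (fun n => hlB n * (n * x ^ (n-1))) (hlV x ^ 2 / 4) := by
  have hx32 : ‖x/4‖ < 1/32 := by
    rw [norm_div, Complex.norm_ofNat]; linarith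
  have h1 : HasSum (fun n => (1/4 : ℂ) * ((catalan (n+1) : ℂ) * (x/4) ^ n))
      (hlC (x/4) ^ 2 / 4) := by
    have := (hasSum_hlC_sq (by linarith : ‖x/4‖ < 1/4)).mul_left (1/4 : ℂ)
    rw [show hlC (x/4) ^ 2 / 4 = 1/4 * hlC (x/4) ^ 2 by ring]; exact this
  have h2 : ∀ n : ℕ, hlB (n+1) * (((n+1 : ℕ) : ℂ) * x ^ (n+1-1))
      = (1/4 : ℂ) * ((catalan (n+1) : ℂ) * (x/4) ^ n) := by
    intro n
    have h := hlB_succ n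
    have h4 : ((4:ℂ)) ^ (n+1) ≠ 0 := pow_ne_zero _ (by norm_num)
    have hxn : (x/4) ^ n = x ^ n / 4 ^ n := div_pow x 4 n
    have hstep : hlB (n+1) * (((n+1 : ℕ) : ℂ)) * x ^ n
        = (catalan (n+1) : ℂ) / 4 ^ (n+1) * x ^ n := by
      rw [show ((n+1 : ℕ) : ℂ) = (n : ℂ) + 1 from by push_cast; ring] at *
      rw [h]
    have h4n : ((4:ℂ)) ^ n ≠ 0 := pow_ne_zero _ (by norm_num)
    calc hlB (n+1) * (((n+1 : ℕ) : ℂ) * x ^ (n+1-1))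
        = hlB (n+1) * (((n+1 : ℕ) : ℂ)) * x ^ n := by rw [Nat.add_sub_cancel]; ring
      _ = (catalan (n+1) : ℂ) / 4 ^ (n+1) * x ^ n := hstep
      _ = (1/4 : ℂ) * ((catalan (n+1) : ℂ) * (x/4) ^ n) := by
          rw [hxn, pow_succ]
          ring
  have h3 : HasSum (fun n => hlB (n+1) * (((n+1:ℕ) : ℂ) * x ^ (n+1-1))) (hlC (x/4) ^ 2 / 4) := by
    rw [funext h2]; exact h1
  have h5 := (hasSum_nat_add_iff (f := fun n => hlB n * ((n : ℂ) * x ^ (n-1))) 1).1 h3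
  have h4 : HasSum (fun n => hlB n * (n * x ^ (n-1))) (hlC (x/4) ^ 2 / 4) := by
    simpa [hlB_zero] using h5
  have hC : hlC (x/4) = hlV x := by
    rw [hlC_closed hx32, hlV, show (4:ℂ) * (x/4) = x from by ring]
  rwa [hC] at h4

lemma hlS_hasDerivAt {x : ℂ} (hx : ‖x‖ < 1/8) :
    HasDerivAt hlS (hlV x ^ 2 / 4) x := by
  have hmain : HasDerivAt (fun z => ∑' n, hlB n * z ^ n)
      (∑' n, hlB n * (n * x ^ (n-1))) x := by
    apply hasDerivAt_tsum_of_isPreconnected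
      (u := fun n : ℕ => 8 * ((n : ℝ) * (1/8) ^ n))
      (g := fun (n : ℕ) (z : ℂ) => hlB n * z ^ n)
      (g' := fun (n : ℕ) (z : ℂ) => hlB n * ((n : ℂ) * z ^ (n-1)))
      (t := Metric.ball (0:ℂ) (1/8)) (y₀ := 0)
    · exact (summable_pow_mul_geometric_of_norm_lt_one 1 (by norm_num : ‖(1/8 : ℝ)‖ < 1)).mul_left 8
        |>.congr (fun n => by push_cast; ring)
    · exact Metric.isOpen_ball
    · exact (convex_ball _ _).isPreconnected
    · intro n y _
      exact (hasDerivAt_pow n y).const_mul (hlB n)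
    · intro n y hy
      rw [Metric.mem_ball, dist_zero_right] at hy
      rcases Nat.eq_zero_or_pos n with rfl | hn
      · simp
      · rw [norm_mul, norm_mul, norm_pow, Complex.norm_natCast]
        have hb := hlB_norm_le n
        have hy' : ‖y‖ ^ (n-1) ≤ (1/8 : ℝ) ^ (n-1) :=
          pow_le_pow_left₀ (norm_nonneg y) (le_of_lt hy) _
        have h8 : ((1:ℝ)/8) ^ (n-1) * (1/8) = (1/8)^n := by
          rw [← pow_succ, show n - 1 + 1 = n from by omega]
        calc ‖hlB n‖ * ((n:ℝ) * ‖y‖ ^ (n-1)) ≤ 1 * ((n:ℝ) * (1/8)^(n-1)) := by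
              gcongr
          _ = 8 * ((n:ℝ) * ((1/8)^(n-1) * (1/8))) := by ring
          _ = 8 * ((n:ℝ) * (1/8) ^ n) := by rw [h8]
    · exact Metric.mem_ball_self (by norm_num)
    · apply Summable.of_norm
      exact Summable.of_nonneg_of_le (fun n => norm_nonneg _)
        (fun n => by simpa using hlS_term_norm_le n 0)
        (summable_geometric_of_lt_one (norm_nonneg (0:ℂ)) (by simp))
    · rw [Metric.mem_ball, dist_zero_right]; exact hx
  rw [(hasSum_hlS_deriv hx).tsum_eq] at hmain
  exact hmain

/-! ### Derivative of `hlG` -/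

lemma hlG_hasDerivAt {x : ℂ} (hx : x.re < 1) :
    HasDerivAt hlG (hlV x ^ 2 / 4) x := by
  have hx1 : x ≠ 1 := by intro h; rw [h] at hx; simp at hx
  have hslit : (1 : ℂ) - x ∈ Complex.slitPlane := by
    apply Or.inl
    simp only [Complex.sub_re, Complex.one_re]
    linarith
  set u := hlU x with hu
  have husq : u * u = 1 - x := hlU_sq hx1
  have hune : u ≠ 0 := hlU_ne_zero hx
  have h1une : 1 + u ≠ 0 := one_add_hlU_ne hx
  have hvne : hlV x ≠ 0 := hlV_ne_zero hx
  have hvslit : hlV x ∈ Complex.slitPlane := Or.inl (hlV_re_pos hx)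
  -- derivative of u
  have hder1 : HasDerivAt (fun z : ℂ => 1 - z) (-1) x := by
    simpa using (hasDerivAt_id x).const_sub 1
  have hderU : HasDerivAt hlU ((1:ℂ)/2 * (1-x) ^ ((1:ℂ)/2 - 1) * (-1)) x :=
    hder1.cpow_const hslit
  have hpow : (1-x) ^ ((1:ℂ)/2 - 1) = u⁻¹ := by
    rw [show (1:ℂ)/2 - 1 = -(1/2) from by ring, Complex.cpow_neg]
    rfl
  rw [hpow] at hderU
  -- derivative of v = 2 * (1+u)⁻¹
  have hderIU : HasDerivAt (fun z => ((1:ℂ) + hlU z)⁻¹)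
      (-((1:ℂ)/2 * u⁻¹ * (-1)) / (1+u)^2) x := by
    have hadd : HasDerivAt (fun z => (1:ℂ) + hlU z) ((1:ℂ)/2 * u⁻¹ * (-1)) x :=
      hderU.const_add 1
    exact hadd.inv h1une
  have hderV : HasDerivAt hlV (2 * (-((1:ℂ)/2 * u⁻¹ * (-1)) / (1+u)^2)) x := by
    have hVdef : hlV = fun z => 2 * ((1:ℂ) + hlU z)⁻¹ := by
      funext z
      rw [hlV, div_eq_mul_inv]
    rw [hVdef]
    exact hderIU.const_mul (2:ℂ)
  -- derivative of log v
  have hderLog : HasDerivAt (fun z => Complex.log (hlV z))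
      ((hlV x)⁻¹ * (2 * (-((1:ℂ)/2 * u⁻¹ * (-1)) / (1+u)^2))) x :=
    (Complex.hasDerivAt_log hvslit).comp x hderV
  -- assemble
  have htotal : HasDerivAt hlG
      (-(2 * (-((1:ℂ)/2 * u⁻¹ * (-1)) / (1+u)^2))
        + 2 * ((hlV x)⁻¹ * (2 * (-((1:ℂ)/2 * u⁻¹ * (-1)) / (1+u)^2)))) x := by
    have h1 : HasDerivAt (fun z => 1 - hlV z)
        (-(2 * (-((1:ℂ)/2 * u⁻¹ * (-1)) / (1+u)^2))) x := by
      simpa using hderV.const_sub 1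
    have hGdef : hlG = fun z => (1 - hlV z) + 2 * Complex.log (hlV z) := by
      funext z
      rw [hlG]
    rw [hGdef]
    exact h1.add (hderLog.const_mul 2)
  convert htotal using 1
  have hv : hlV x = 2 / (1 + u) := by rw [hlV, hu]
  rw [hv]
  field_simp
  ring

/-! ### `hlS = hlG` near zero -/

lemma hlS_eq_hlG {x : ℂ} (hx : ‖x‖ < 1/8) : hlS x = hlG x := by
  set f := fun z => hlS z - hlG z with hf
  have hderiv : ∀ z ∈ Metric.ball (0:ℂ) (1/8),
      HasFDerivWithinAt f (0 : ℂ →L[ℂ] ℂ) (Metric.ball (0:ℂ) (1/8)) z := by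
    intro z hz
    rw [Metric.mem_ball, dist_zero_right] at hz
    have hzre : z.re < 1 := by
      have h1 := Complex.re_le_norm z
      have h2 : ‖z‖ = ‖z‖ := rfl
      linarith
    have h := (hlS_hasDerivAt hz).sub (hlG_hasDerivAt hzre)
    simp only [sub_self] at h
    have h0map : ContinuousLinearMap.toSpanSingleton ℂ (0:ℂ) = 0 := by
      ext w; simp
    have h2 := h.hasFDerivAt.hasFDerivWithinAt (s := Metric.ball (0:ℂ) (1/8))
    rwa [h0map] at h2
  have hbound : ∀ z ∈ Metric.ball (0:ℂ) (1/8), ‖(0 : ℂ →L[ℂ] ℂ)‖ ≤ 0 := by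
    intro z _; simp
  have hx' : x ∈ Metric.ball (0:ℂ) (1/8) := by
    rw [Metric.mem_ball, dist_zero_right]; exact hx
  have h0 : (0:ℂ) ∈ Metric.ball (0:ℂ) (1/8) := Metric.mem_ball_self (by norm_num)
  have hkey := Convex.norm_image_sub_le_of_norm_hasFDerivWithin_le hderiv hbound
    (convex_ball _ _) h0 hx'
  have hle : ‖hlS x - hlG x‖ ≤ 0 := by
    have h00 : f 0 = 0 := by simp [hf, hlS_zero, hlG_zero]
    calc ‖hlS x - hlG x‖ = ‖f x - f 0‖ := by rw [h00, sub_zero]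
      _ ≤ 0 * ‖x - 0‖ := hkey
      _ = 0 := by ring
  exact sub_eq_zero.1 (norm_le_zero_iff.1 hle)

/-! ### `hFun ζ = hlG (1/ζ)` for large `ζ` -/

lemma hFun_eq {ζ : ℂ} (hζ : 8 < ‖ζ‖) : hFun ζ = hlG (1/ζ) := by
  have hζ0 : ζ ≠ 0 := by
    intro h; rw [h] at hζ; simp at hζ; linarith
  set x := 1/ζ with hxdef
  have hxn : ‖x‖ < 1/8 := by
    rw [hxdef, norm_div, norm_one, div_lt_div_iff₀ (by linarith : (0:ℝ) < ‖ζ‖) (by norm_num)]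
    linarith
  have hζx : ζ * x = 1 := by
    rw [hxdef, mul_one_div, div_self hζ0]
  have hxre : x.re < 1 := by
    have h1 := Complex.re_le_norm x
    have h2 : ‖x‖ = ‖x‖ := rfl
    linarith
  have hx1 : x ≠ 1 := by
    intro h; rw [h] at hxn; simp at hxn; linarith [hxn]
  set u := hlU x with hu
  have husq : u * u = 1 - x := hlU_sq hx1
  have h1une : 1 + u ≠ 0 := one_add_hlU_ne hxre
  have hvne : hlV x ≠ 0 := hlV_ne_zero hxre
  have hvpos : 0 < (hlV x).re := hlV_re_pos hxre
  have hv : hlV x = 2 / (1 + u) := by rw [hlV, hu]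
  have key2 : 2 * ζ * (1 - u) = hlV x := by
    rw [hv, eq_div_iff h1une]
    have h1 : (1 - u) * (1 + u) = x := by linear_combination -husq
    calc 2 * ζ * (1 - u) * (1 + u) = 2 * (ζ * ((1-u) * (1+u))) := by ring
      _ = 2 * (ζ * x) := by rw [h1]
      _ = 2 := by rw [hζx]; ring
  have key1 : sqrtBranch1 ζ = ζ * u := by rw [sqrtBranch1, hu, hlU, hxdef]
  have key3 : 4 * (Real.exp 1 : ℂ) * ζ * (-1 + 2*ζ - 2*(ζ*u))
      = (Real.exp 1 : ℂ) * (hlV x * hlV x) := by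
    linear_combination (Real.exp 1 : ℂ) * (hlV x + 2*ζ*(1-u)) * key2
      - 4*(Real.exp 1:ℂ)*ζ*ζ*husq + 4*(Real.exp 1:ℂ)*ζ*hζx
  have harg : (hlV x).arg + (hlV x).arg ∈ Set.Ioc (-Real.pi) Real.pi := by
    have h1 : |(hlV x).arg| < Real.pi / 2 :=
      Complex.abs_arg_lt_pi_div_two_iff.2 (Or.inl hvpos)
    rcases abs_lt.1 h1 with ⟨ha, hb⟩
    constructor <;> [linarith [Real.pi_pos]; linarith [Real.pi_pos]]
  have hlog : Complex.log ((Real.exp 1 : ℂ) * (hlV x * hlV x))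
      = 1 + 2 * Complex.log (hlV x) := by
    rw [Complex.log_ofReal_mul (Real.exp_pos 1) (mul_ne_zero hvne hvne), Real.log_exp,
      Complex.log_mul hvne hvne harg]
    push_cast
    ring
  rw [hFun, key1, key3, hlog, hlG]
  have hlin : 2 * (ζ * u) - 2 * ζ = -(hlV x) := by linear_combination -key2
  rw [hlin]
  ring

/-! ### Tail estimate -/

set_option maxHeartbeats 1000000 in
lemma tail_bound {x : ℂ} (hx : ‖x‖ < 1/8) (M : ℕ) :
    ‖hlS x - ∑ j ∈ Finset.range (M+1), hlB j * x ^ j‖ ≤ 2 * ‖x‖ ^ (M+1) := by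
  have hx1 : ‖x‖ < 1 := by linarith
  have hsum : Summable (fun j => hlB j * x ^ j) := (summable_hlS hx1).of_norm
  have hsplit := Summable.sum_add_tsum_nat_add (f := fun j => hlB j * x ^ j) (M+1) hsum
  have htail : hlS x - ∑ j ∈ Finset.range (M+1), hlB j * x ^ j
      = ∑' j, hlB (j + (M+1)) * x ^ (j + (M+1)) := by
    rw [hlS, ← hsplit]; ring
  rw [htail]
  have hsumn : Summable (fun j => ‖hlB (j + (M+1)) * x ^ (j + (M+1))‖) :=
    (summable_nat_add_iff (M+1)).2 (summable_hlS hx1)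
  have hgeom : Summable (fun j : ℕ => ‖x‖ ^ (j + (M+1))) := by
    apply Summable.congr ((summable_geometric_of_lt_one (norm_nonneg x) hx1).mul_right (‖x‖^(M+1)))
    intro j
    rw [← pow_add]
  calc ‖∑' j, hlB (j + (M+1)) * x ^ (j + (M+1))‖
      ≤ ∑' j, ‖hlB (j + (M+1)) * x ^ (j + (M+1))‖ := norm_tsum_le_tsum_norm hsumn
    _ ≤ ∑' j : ℕ, ‖x‖ ^ (j + (M+1)) :=
        Summable.tsum_le_tsum (fun j => hlS_term_norm_le _ x) hsumn hgeom
    _ = (1 - ‖x‖)⁻¹ * ‖x‖ ^ (M+1) := by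
        rw [← tsum_geometric_of_lt_one (norm_nonneg x) hx1, ← tsum_mul_right]
        exact tsum_congr (fun j => pow_add _ _ _)
    _ ≤ 2 * ‖x‖ ^ (M+1) := by
        have h2 : (1 - ‖x‖)⁻¹ ≤ 2 := by
          rw [inv_le_comm₀ (by linarith) (by norm_num)]
          linarith [norm_nonneg x]
        have := pow_nonneg (norm_nonneg x) (M+1)
        nlinarith

/-- Laurent expansion of `h` at infinity: `h(ζ) = Σ_{j≥1} b_j/ζ^j` with
`b_j = 2(2j-1)!/((j+1)(j!)² 4^j)`; in particular `b_1 = 1/4`, `b_2 = 1/16`, `b_3 = 5/192`. -/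
theorem h_laurent_expansion :
    (∀ M : ℕ,
      (fun ζ : ℂ => hFun ζ - ∑ j ∈ Finset.Icc 1 M, (laurentCoeff j : ℂ) / ζ ^ j)
        =O[Bornology.cobounded ℂ ⊓
            Filter.principal {ζ : ℂ | ζ.im ≠ 0 ∨ ζ.re < 0 ∨ 1 < ζ.re}]
          fun ζ : ℂ => ζ ^ (-(M : ℤ) - 1)) ∧
    laurentCoeff 1 = 1 / 4 ∧ laurentCoeff 2 = 1 / 16 ∧ laurentCoeff 3 = 5 / 192 := by
  refine ⟨?_, ?_, ?_, ?_⟩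
  · intro M
    rw [Asymptotics.isBigO_iff]
    refine ⟨2, ?_⟩
    have hev : ∀ᶠ ζ : ℂ in Bornology.cobounded ℂ, 8 < ‖ζ‖ :=
      (Filter.hasBasis_cobounded_norm.eventually_iff).2
        ⟨9, trivial, fun x hx => lt_of_lt_of_le (by norm_num) hx⟩
    apply Filter.Eventually.filter_mono inf_le_left
    filter_upwards [hev] with ζ hζ
    have hζ0 : ζ ≠ 0 := by
      intro h; rw [h] at hζ; simp at hζ; linarith
    set x := 1/ζ with hxdef
    have hxn : ‖x‖ < 1/8 := by
      rw [hxdef, norm_div, norm_one, div_lt_div_iff₀ (by linarith : (0:ℝ) < ‖ζ‖) (by norm_num)]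
      linarith
    have h1 : hFun ζ = hlS x := (hFun_eq hζ).trans (hlS_eq_hlG hxn).symm
    have h2 : ∑ j ∈ Finset.Icc 1 M, (laurentCoeff j : ℂ) / ζ ^ j
        = ∑ j ∈ Finset.range (M+1), hlB j * x ^ j := by
      have hstep : ∑ j ∈ Finset.Icc 1 M, (laurentCoeff j : ℂ) / ζ ^ j
          = ∑ j ∈ Finset.Icc 1 M, hlB j * x ^ j := by
        apply Finset.sum_congr rfl
        intro j hj
        rw [Finset.mem_Icc] at hj
        rw [hlB, ← laurentCoeff_eq_hlBR hj.1, hxdef, div_pow, one_pow, div_eq_mul_inv,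
          div_eq_mul_inv, one_mul]
      rw [hstep]
      apply Finset.sum_subset
      · intro j hj
        rw [Finset.mem_Icc] at hj
        rw [Finset.mem_range]
        omega
      · intro j hj hnot
        rw [Finset.mem_range] at hj
        rw [Finset.mem_Icc] at hnot
        have : j = 0 := by omega
        rw [this, hlB_zero, zero_mul]
    have hzpow : ζ ^ (-(M:ℤ) - 1) = (ζ ^ (M+1))⁻¹ := by
      rw [show -(M:ℤ) - 1 = -((M+1 : ℕ) : ℤ) from by push_cast; ring, zpow_neg, zpow_natCast]
    have hnorm : ‖ζ ^ (-(M:ℤ) - 1)‖ = ‖x‖ ^ (M+1) := by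
      rw [hzpow, norm_inv, norm_pow, hxdef, norm_div, norm_one, ← inv_pow, one_div]
    rw [h1, h2, hnorm]
    exact tail_bound hxn M
  · norm_num [laurentCoeff, Nat.factorial]
  · norm_num [laurentCoeff, Nat.factorial]
  · norm_num [laurentCoeff, Nat.factorial]
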